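/- (Theorem 1, discrete-time analogue.) Consider two discrete-time Markov chains on augmented states (x,f) ∈ ℤ₊^n × ℤ₊^{n+1} evolving by the linear-network transitions with probabilities proportional to rates λ, μ_1,…,μ_n and λ', μ'_1,…,μ'_n, coupled by the marching soldiers scheme, started from equal initial states and zero flow counters. Under rate conditions (a)–(c) of the absorbing-set lemma, almost surely F_{i,i+1}(t) ≤ F'_{i,i+1}(t) for all times t and all links i = 0,…,n; consequently (F_{i,i+1}(t))_t ≤_st (F'_{i,i+1}(t))_t. -/

import Mathlib

open MeasureTheory

/-- Population step over link `j` of the open linear network (nodes 0-based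
in `Fin n`; link `0` is the arrival link, link `j` for `1 ≤ j ≤ n` the
service link out of node `j−1`). -/
def stepX (n : ℕ) (j : Fin (n + 1)) (x : Fin n → ℤ) : Fin n → ℤ :=
  fun k => x k + (if (j : ℕ) = (k : ℕ) then 1 else 0)
             - (if (j : ℕ) = (k : ℕ) + 1 then 1 else 0)

/-- Flow-counter step over link `j`. -/
def stepF (n : ℕ) (j : Fin (n + 1)) (f : Fin (n + 1) → ℤ) : Fin (n + 1) → ℤ :=
  fun l => f l + (if l = j then 1 else 0)

/-- A joint state of the coupled state–flow chains:
`((x, f), (x', f'))`. -/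
abbrev CState (n : ℕ) :=
  ((Fin n → ℤ) × (Fin (n + 1) → ℤ)) × ((Fin n → ℤ) × (Fin (n + 1) → ℤ))

/-- One transition of the marching soldiers coupling with strictly positive
probability (proportional to a positive rate): over some link `j`, either a
joint move (positive `min` of the two rates), a solitary move of the first
component (positive rate excess), or a solitary move of the second. -/
def CoupledStep (n : ℕ) (r r' : Fin (n + 1) → (Fin n → ℤ) → ℝ)
    (p q : CState n) : Prop :=
  ∃ j : Fin (n + 1),
    (0 < min (r j p.1.1) (r' j p.2.1) ∧
      q = ((stepX n j p.1.1, stepF n j p.1.2), (stepX n j p.2.1, stepF n j p.2.2))) ∨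
    (r' j p.2.1 < r j p.1.1 ∧
      q = ((stepX n j p.1.1, stepF n j p.1.2), p.2)) ∨
    (r j p.1.1 < r' j p.2.1 ∧
      q = (p.1, (stepX n j p.2.1, stepF n j p.2.2)))

/-- The coupling invariant. -/
def CInv (n : ℕ) (p : CState n) : Prop :=
  (∀ l : Fin (n + 1), p.1.2 l ≤ p.2.2 l) ∧
  (∀ k : Fin n, p.1.1 k - p.2.1 k =
    (p.1.2 k.castSucc - p.2.2 k.castSucc) - (p.1.2 k.succ - p.2.2 k.succ))

lemma rate_le (n : ℕ) (hn : 0 < n)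
    (S S' : Set (Fin n → ℤ))
    (r r' : Fin (n + 1) → (Fin n → ℤ) → ℝ)
    (ha : ∀ x ∈ S, ∀ x' ∈ S', x' ⟨0, hn⟩ ≤ x ⟨0, hn⟩ → r 0 x ≤ r' 0 x')
    (hb : ∀ (j : Fin (n + 1)) (hj0 : 0 < (j : ℕ)) (hjn : (j : ℕ) < n),
      ∀ x ∈ S, ∀ x' ∈ S',
        x ⟨(j : ℕ) - 1, Nat.lt_of_le_of_lt (Nat.sub_le _ _) hjn⟩ ≤ x' ⟨(j : ℕ) - 1, Nat.lt_of_le_of_lt (Nat.sub_le _ _) hjn⟩ →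
        x' ⟨(j : ℕ), hjn⟩ ≤ x ⟨(j : ℕ), hjn⟩ →
        r j x ≤ r' j x')
    (hc : ∀ x ∈ S, ∀ x' ∈ S',
      x ⟨n - 1, Nat.sub_lt hn Nat.one_pos⟩ ≤ x' ⟨n - 1, Nat.sub_lt hn Nat.one_pos⟩ →
      r (Fin.last n) x ≤ r' (Fin.last n) x')
    (p : CState n) (hS : p.1.1 ∈ S) (hS' : p.2.1 ∈ S')
    (hInv : CInv n p) (j : Fin (n + 1)) (hje : p.1.2 j = p.2.2 j) :
    r j p.1.1 ≤ r' j p.2.1 := by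
  obtain ⟨hF, hX⟩ := hInv
  rcases Nat.lt_or_ge 0 (j : ℕ) with hj0 | hj0
  · rcases Nat.lt_or_ge (j : ℕ) n with hjn | hjn
    · -- internal link
      have e1 : ((⟨(j : ℕ) - 1, by omega⟩ : Fin n)).succ = j := by
        apply Fin.ext; simp [Fin.val_succ]; omega
      have e2 : ((⟨(j : ℕ), hjn⟩ : Fin n)).castSucc = j := by
        apply Fin.ext; simp
      have h1 := hX ⟨(j : ℕ) - 1, by omega⟩
      have h2 := hX ⟨(j : ℕ), hjn⟩
      have hje1 : p.1.2 ((⟨(j : ℕ) - 1, by omega⟩ : Fin n)).succ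
          = p.2.2 ((⟨(j : ℕ) - 1, by omega⟩ : Fin n)).succ := by rw [e1]; exact hje
      have hje2 : p.1.2 ((⟨(j : ℕ), hjn⟩ : Fin n)).castSucc
          = p.2.2 ((⟨(j : ℕ), hjn⟩ : Fin n)).castSucc := by rw [e2]; exact hje
      have hle1 := hF ((⟨(j : ℕ) - 1, by omega⟩ : Fin n)).castSucc
      have hle2 := hF ((⟨(j : ℕ), hjn⟩ : Fin n)).succ
      exact hb j hj0 hjn _ hS _ hS' (by omega) (by omega)
    · -- last link
      have hjl : j = Fin.last n := by apply Fin.ext; simp; omega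
      subst hjl
      have e1 : ((⟨n - 1, by omega⟩ : Fin n)).succ = Fin.last n := by
        apply Fin.ext; simp [Fin.val_succ]; omega
      have h1 := hX ⟨n - 1, by omega⟩
      have hje1 : p.1.2 ((⟨n - 1, by omega⟩ : Fin n)).succ
          = p.2.2 ((⟨n - 1, by omega⟩ : Fin n)).succ := by rw [e1]; exact hje
      have hle1 := hF ((⟨n - 1, by omega⟩ : Fin n)).castSucc
      exact hc _ hS _ hS' (by omega)
  · -- arrival link
    have hjl : j = 0 := by apply Fin.ext; rw [Fin.val_zero]; omega
    subst hjl
    have e1 : ((⟨0, hn⟩ : Fin n)).castSucc = (0 : Fin (n + 1)) := by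
      apply Fin.ext; simp
    have h1 := hX ⟨0, hn⟩
    have hje1 : p.1.2 ((⟨0, hn⟩ : Fin n)).castSucc
        = p.2.2 ((⟨0, hn⟩ : Fin n)).castSucc := by rw [e1]; exact hje
    have hle1 := hF ((⟨0, hn⟩ : Fin n)).succ
    exact ha _ hS _ hS' (by omega)

lemma inv_step (n : ℕ) (hn : 0 < n)
    (S S' : Set (Fin n → ℤ))
    (r r' : Fin (n + 1) → (Fin n → ℤ) → ℝ)
    (ha : ∀ x ∈ S, ∀ x' ∈ S', x' ⟨0, hn⟩ ≤ x ⟨0, hn⟩ → r 0 x ≤ r' 0 x')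
    (hb : ∀ (j : Fin (n + 1)) (hj0 : 0 < (j : ℕ)) (hjn : (j : ℕ) < n),
      ∀ x ∈ S, ∀ x' ∈ S',
        x ⟨(j : ℕ) - 1, Nat.lt_of_le_of_lt (Nat.sub_le _ _) hjn⟩ ≤ x' ⟨(j : ℕ) - 1, Nat.lt_of_le_of_lt (Nat.sub_le _ _) hjn⟩ →
        x' ⟨(j : ℕ), hjn⟩ ≤ x ⟨(j : ℕ), hjn⟩ →
        r j x ≤ r' j x')
    (hc : ∀ x ∈ S, ∀ x' ∈ S',
      x ⟨n - 1, Nat.sub_lt hn Nat.one_pos⟩ ≤ x' ⟨n - 1, Nat.sub_lt hn Nat.one_pos⟩ →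
      r (Fin.last n) x ≤ r' (Fin.last n) x')
    (p q : CState n) (hS : p.1.1 ∈ S) (hS' : p.2.1 ∈ S')
    (hInv : CInv n p) (h : q = p ∨ CoupledStep n r r' p q) :
    CInv n q := by
  rcases h with rfl | ⟨j, hcase⟩
  · exact hInv
  obtain ⟨hF, hX⟩ := hInv
  rcases hcase with ⟨-, rfl⟩ | ⟨hlt, rfl⟩ | ⟨hlt, rfl⟩
  · constructor
    · intro l
      simp only [stepF]
      exact add_le_add_left (hF l) _
    · intro k
      have h2 := hX k
      simp only [stepX, stepF, Fin.ext_iff, Fin.coe_castSucc, Fin.val_succ] at h2 ⊢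
      split_ifs <;> omega
  · -- solitary first move: need strict inequality of flows at j
    have hjlt : p.1.2 j < p.2.2 j := by
      rcases lt_or_eq_of_le (hF j) with h | h
      · exact h
      · exact absurd (rate_le n hn S S' r r' ha hb hc p hS hS' ⟨hF, hX⟩ j h)
          (not_le.mpr hlt)
    constructor
    · intro l
      have h1 := hF l
      simp only [stepF]
      split_ifs with h
      · rw [h]; omega
      · omega
    · intro k
      have h2 := hX k
      simp only [stepX, stepF, Fin.ext_iff, Fin.coe_castSucc, Fin.val_succ] at h2 ⊢
      split_ifs <;> omega
  · constructor
    · intro l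
      have h1 := hF l
      simp only [stepF]
      split_ifs <;> omega
    · intro k
      have h2 := hX k
      simp only [stepX, stepF, Fin.ext_iff, Fin.coe_castSucc, Fin.val_succ] at h2 ⊢
      split_ifs <;> omega

/-- (Theorem 1, discrete-time analogue.)  Two discrete-time linear-network
state–flow chains coupled by the marching soldiers scheme, started from equal
initial states and zero flow counters.  Under the rate conditions
(a) `x₁ ≥ x'₁ ⟹ λ(x) ≤ λ'(x')`,
(b) `x_i ≤ x'_i ∧ x_{i+1} ≥ x'_{i+1} ⟹ μ_i(x) ≤ μ'_i(x')` for internal `i`,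
(c) `x_n ≤ x'_n ⟹ μ_n(x) ≤ μ'_n(x')`,
almost surely `F_{i,i+1}(t) ≤ F'_{i,i+1}(t)` for all times `t` and links `i`;
consequently the flow counting processes are ordered in the strong stochastic
order of finite-dimensional distributions. -/
theorem stmt8 (n : ℕ) (hn : 0 < n)
    (S S' : Set (Fin n → ℤ))
    (r r' : Fin (n + 1) → (Fin n → ℤ) → ℝ)
    (ha : ∀ x ∈ S, ∀ x' ∈ S', x' ⟨0, hn⟩ ≤ x ⟨0, hn⟩ → r 0 x ≤ r' 0 x')
    (hb : ∀ (j : Fin (n + 1)) (hj0 : 0 < (j : ℕ)) (hjn : (j : ℕ) < n),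
      ∀ x ∈ S, ∀ x' ∈ S',
        x ⟨(j : ℕ) - 1, by omega⟩ ≤ x' ⟨(j : ℕ) - 1, by omega⟩ →
        x' ⟨(j : ℕ), hjn⟩ ≤ x ⟨(j : ℕ), hjn⟩ →
        r j x ≤ r' j x')
    (hc : ∀ x ∈ S, ∀ x' ∈ S',
      x ⟨n - 1, by omega⟩ ≤ x' ⟨n - 1, by omega⟩ →
      r (Fin.last n) x ≤ r' (Fin.last n) x')
    {Ω : Type*} [MeasurableSpace Ω] (P : Measure Ω) [IsProbabilityMeasure P]
    (Z : ℕ → Ω → CState n)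
    (hZmeas : ∀ t, Measurable (Z t))
    -- the chains stay in their state spaces:
    (hZS : ∀ᵐ ω ∂P, ∀ t, (Z t ω).1.1 ∈ S ∧ (Z t ω).2.1 ∈ S')
    -- equal initial states and zero flow counters:
    (hZ0 : ∀ᵐ ω ∂P, (Z 0 ω).1.1 = (Z 0 ω).2.1 ∧ (Z 0 ω).1.2 = 0 ∧ (Z 0 ω).2.2 = 0)
    -- each step is a positive-rate marching soldiers transition (or no move):
    (hZstep : ∀ᵐ ω ∂P, ∀ t,
      Z (t + 1) ω = Z t ω ∨ CoupledStep n r r' (Z t ω) (Z (t + 1) ω)) :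
    (∀ᵐ ω ∂P, ∀ (t : ℕ) (j : Fin (n + 1)), (Z t ω).1.2 j ≤ (Z t ω).2.2 j) ∧
    (∀ (j : Fin (n + 1)) (m : ℕ) (ts : Fin m → ℕ) (φ : (Fin m → ℝ) → ℝ),
      Measurable φ → Monotone φ → (∃ C, ∀ v, |φ v| ≤ C) →
      ∫ ω, φ (fun k => ((Z (ts k) ω).1.2 j : ℝ)) ∂P ≤
        ∫ ω, φ (fun k => ((Z (ts k) ω).2.2 j : ℝ)) ∂P) := by
  have key : ∀ᵐ ω ∂P, ∀ t, CInv n (Z t ω) := by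
    filter_upwards [hZS, hZ0, hZstep] with ω hSw h0w hstepw
    intro t
    induction t with
    | zero =>
      refine ⟨fun l => ?_, fun k => ?_⟩
      · rw [h0w.2.1, h0w.2.2]
      · rw [h0w.1, h0w.2.1, h0w.2.2]; simp
    | succ t ih =>
      exact inv_step n hn S S' r r' ha hb hc _ _ (hSw t).1 (hSw t).2 ih (hstepw t)
  have main : ∀ᵐ ω ∂P, ∀ (t : ℕ) (j : Fin (n + 1)),
      (Z t ω).1.2 j ≤ (Z t ω).2.2 j := by
    filter_upwards [key] with ω h t j
    exact (h t).1 j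
  refine ⟨main, ?_⟩
  intro j m ts φ hφm hφmono hbd
  obtain ⟨C, hC⟩ := hbd
  have hm1 : Measurable fun ω => φ (fun k => ((Z (ts k) ω).1.2 j : ℝ)) := by
    apply hφm.comp
    apply measurable_pi_lambda
    intro k
    exact measurable_from_top.comp
      ((measurable_pi_apply j).comp
        ((measurable_snd.comp measurable_fst).comp (hZmeas (ts k))))
  have hm2 : Measurable fun ω => φ (fun k => ((Z (ts k) ω).2.2 j : ℝ)) := by
    apply hφm.comp
    apply measurable_pi_lambda
    intro k
    exact measurable_from_top.comp
      ((measurable_pi_apply j).comp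
        ((measurable_snd.comp measurable_snd).comp (hZmeas (ts k))))
  have hint1 : Integrable (fun ω => φ (fun k => ((Z (ts k) ω).1.2 j : ℝ))) P :=
    ⟨hm1.aestronglyMeasurable,
      HasFiniteIntegral.of_bounded (C := C)
        (ae_of_all _ fun ω => by simpa [Real.norm_eq_abs] using hC _)⟩
  have hint2 : Integrable (fun ω => φ (fun k => ((Z (ts k) ω).2.2 j : ℝ))) P :=
    ⟨hm2.aestronglyMeasurable,
      HasFiniteIntegral.of_bounded (C := C)
        (ae_of_all _ fun ω => by simpa [Real.norm_eq_abs] using hC _)⟩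
  refine integral_mono_ae hint1 hint2 ?_
  filter_upwards [main] with ω h
  exact hφmono fun k => Int.cast_le.mpr (h (ts k) j)
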